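/- arXiv:1111.4842 — 3 statements merged into one kernel-verified Lean document; each statement's English description precedes it below -/
import Mathlib

section
/- For every positive integer n, the sum of those integers k with 1 ≤ k ≤ n for which gcd(k, n) is a perfect square equals n(β(n) + χ(n))/2, where χ(n) = 1 if n is a perfect square and χ(n) = 0 otherwise. -/
/-- The Liouville function `λ(n) = (-1)^Ω(n)`. -/
def lam (n : ℕ) : ℤ := (-1) ^ (ArithmeticFunction.cardFactors n)

/-- The alternating sum-of-divisors function `β(n) = ∑_{d ∣ n} d · λ(n/d)`. -/
def beta (n : ℕ) : ℤ := ∑ d ∈ n.divisors, (d : ℤ) * lam (n / d)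

open Finset ArithmeticFunction
open scoped ArithmeticFunction.zeta

lemma lam_mul {m n : ℕ} (hm : m ≠ 0) (hn : n ≠ 0) : lam (m * n) = lam m * lam n := by
  unfold lam
  rw [ArithmeticFunction.cardFactors_mul hm hn, pow_add]

/-- Liouville as an arithmetic function. -/
def Lf : ArithmeticFunction ℤ := ⟨fun n => if n = 0 then 0 else lam n, if_pos rfl⟩

lemma Lf_apply {n : ℕ} (hn : n ≠ 0) : Lf n = lam n := if_neg hn

lemma Lf_mult : Lf.IsMultiplicative := by
  constructor
  · rw [Lf_apply one_ne_zero]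
    simp [lam]
  · intro m n h
    rcases eq_or_ne m 0 with rfl | hm
    · have : n = 1 := by simpa using h
      subst this
      simp [Lf, lam]
    rcases eq_or_ne n 0 with rfl | hn'
    · have : m = 1 := by simpa [Nat.coprime_zero_right] using h
      subst this
      simp [Lf, lam]
    · rw [Lf_apply hm, Lf_apply hn', Lf_apply (Nat.mul_ne_zero hm hn'), lam_mul hm hn']

lemma isSquare_iff_fact {n : ℕ} (hn : n ≠ 0) :
    IsSquare n ↔ ∀ p, Even (n.factorization p) := by
  constructor
  · rintro ⟨r, rfl⟩ p
    have hr : r ≠ 0 := by rintro rfl; simp at hn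
    rw [Nat.factorization_mul hr hr]
    exact ⟨_, rfl⟩
  · intro h
    refine ⟨n.factorization.prod fun p k => p ^ (k / 2), ?_⟩
    conv_lhs => rw [← Nat.factorization_prod_pow_eq_self hn]
    rw [Finsupp.prod, Finsupp.prod, ← Finset.prod_mul_distrib]
    refine Finset.prod_congr rfl fun p _ => ?_
    rw [← pow_add]
    congr 1
    obtain ⟨c, hc⟩ := h p
    omega

lemma zetaLf_pp {p k : ℕ} (hp : p.Prime) :
    ((↑ζ * Lf : ArithmeticFunction ℤ)) (p ^ k) = if Even k then 1 else 0 := by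
  rw [ArithmeticFunction.coe_zeta_mul_apply, Nat.sum_divisors_prime_pow hp]
  have hcongr : ∀ i ∈ Finset.range (k + 1), Lf (p ^ i) = (-1 : ℤ) ^ i := by
    intro i _
    rw [Lf_apply (pow_ne_zero i hp.pos.ne')]
    unfold lam
    rw [ArithmeticFunction.cardFactors_apply_prime_pow hp]
  rw [Finset.sum_congr rfl hcongr, neg_one_geom_sum]
  by_cases h : Even k <;> simp [h, Nat.even_add_one]

lemma sum_lam {n : ℕ} (hn : n ≠ 0) :
    ∑ d ∈ n.divisors, lam d = if IsSquare n then 1 else 0 := by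
  have h1 : ∑ d ∈ n.divisors, lam d = ((↑ζ * Lf : ArithmeticFunction ℤ)) n := by
    rw [ArithmeticFunction.coe_zeta_mul_apply]
    exact Finset.sum_congr rfl fun d hd => (Lf_apply (Nat.pos_of_mem_divisors hd).ne').symm
  rw [h1, ArithmeticFunction.IsMultiplicative.multiplicative_factorization _
    (ArithmeticFunction.isMultiplicative_zeta.natCast.mul Lf_mult) hn]
  have h2 : ∀ p ∈ n.factorization.support,
      ((↑ζ * Lf : ArithmeticFunction ℤ)) (p ^ n.factorization p)
        = if Even (n.factorization p) then 1 else 0 := by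
    intro p hp
    exact zetaLf_pp (Nat.prime_of_mem_primeFactors (by rwa [← Nat.support_factorization]))
  rw [Finsupp.prod, Finset.prod_congr rfl h2]
  by_cases H : ∀ p, Even (n.factorization p)
  · rw [if_pos ((isSquare_iff_fact hn).mpr H), Finset.prod_eq_one]
    intro p _
    rw [if_pos (H p)]
  · rw [if_neg (fun hs => H ((isSquare_iff_fact hn).mp hs))]
    push_neg at H
    obtain ⟨p, hp⟩ := H
    have hmem : p ∈ n.factorization.support := by
      rw [Finsupp.mem_support_iff]
      intro h0
      exact hp (by simp [h0])
    exact Finset.prod_eq_zero hmem (if_neg hp)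

lemma gauss (m : ℕ) : 2 * ∑ j ∈ Finset.Icc 1 m, (j : ℤ) = m * (m + 1) := by
  induction m with
  | zero => simp
  | succ m ih =>
    rw [Finset.sum_Icc_succ_top (by omega), mul_add, ih]
    push_cast; ring

lemma mult_sum {d n : ℕ} (hd : d ∣ n) (hd0 : d ≠ 0) :
    ∑ k ∈ (Finset.Icc 1 n).filter (fun k => d ∣ k), (k : ℤ)
      = d * ∑ j ∈ Finset.Icc 1 (n / d), (j : ℤ) := by
  rw [Finset.mul_sum]
  refine Finset.sum_nbij' (fun k => k / d) (fun j => d * j) ?_ ?_ ?_ ?_ ?_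
  · intro k hk
    simp only [Finset.mem_filter, Finset.mem_Icc] at hk ⊢
    obtain ⟨⟨h1, h2⟩, h3⟩ := hk
    constructor
    · exact Nat.one_le_div_iff (Nat.pos_of_ne_zero hd0) |>.mpr (Nat.le_of_dvd (by omega) h3)
    · exact Nat.div_le_div_right h2
  · intro j hj
    simp only [Finset.mem_filter, Finset.mem_Icc] at hj ⊢
    obtain ⟨h1, h2⟩ := hj
    refine ⟨⟨Nat.mul_pos (Nat.pos_of_ne_zero hd0) (by omega), ?_⟩, Dvd.intro j rfl⟩
    calc d * j ≤ d * (n / d) := Nat.mul_le_mul_left d h2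
      _ = n := Nat.mul_div_cancel' hd
  · intro k hk
    simp only [Finset.mem_filter] at hk
    exact Nat.mul_div_cancel' hk.2
  · intro j _
    exact Nat.mul_div_cancel_left j (Nat.pos_of_ne_zero hd0)
  · intro k hk
    simp only [Finset.mem_filter] at hk
    exact_mod_cast congrArg Nat.cast (Nat.mul_div_cancel' hk.2).symm

theorem stmt_8 (n : ℕ) (hn : 0 < n) :
    2 * ∑ k ∈ (Finset.Icc 1 n).filter (fun k => IsSquare (Nat.gcd k n)), (k : ℤ) =
      (n : ℤ) * (beta n + if IsSquare n then 1 else 0) := by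
  have hn0 : n ≠ 0 := hn.ne'
  have step1 : ∑ k ∈ (Finset.Icc 1 n).filter (fun k => IsSquare (Nat.gcd k n)), (k : ℤ)
      = ∑ k ∈ Finset.Icc 1 n, ∑ d ∈ n.divisors, (if d ∣ k then (k : ℤ) * lam d else 0) := by
    rw [Finset.sum_filter]
    refine Finset.sum_congr rfl fun k hk => ?_
    have hk1 : 1 ≤ k := (Finset.mem_Icc.mp hk).1
    have hg : Nat.gcd k n ≠ 0 := fun h => by
      rw [Nat.gcd_eq_zero_iff] at h; omega
    have key : ∑ d ∈ n.divisors, (if d ∣ k then (k : ℤ) * lam d else 0)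
        = (k : ℤ) * ∑ d ∈ (Nat.gcd k n).divisors, lam d := by
      rw [Finset.mul_sum, ← Finset.sum_filter]
      apply Finset.sum_congr
      · ext d
        simp only [Finset.mem_filter, Nat.mem_divisors, Nat.dvd_gcd_iff]
        constructor
        · rintro ⟨⟨h1, -⟩, h2⟩; exact ⟨⟨h2, h1⟩, hg⟩
        · rintro ⟨⟨h2, h1⟩, -⟩; exact ⟨⟨h1, hn0⟩, h2⟩
      · intros; rfl
    rw [key, sum_lam hg]
    split <;> ring
  have step2 : ∀ d ∈ n.divisors,
      2 * ∑ k ∈ Finset.Icc 1 n, (if d ∣ k then (k : ℤ) * lam d else 0)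
        = ((n : ℤ) * ((n / d : ℕ) : ℤ) + (n : ℤ)) * lam d := by
    intro d hd
    obtain ⟨hdvd, -⟩ := Nat.mem_divisors.mp hd
    have hd0 : d ≠ 0 := (Nat.pos_of_mem_divisors hd).ne'
    have hsum : ∑ k ∈ Finset.Icc 1 n, (if d ∣ k then (k : ℤ) * lam d else 0)
        = (∑ k ∈ (Finset.Icc 1 n).filter (fun k => d ∣ k), (k : ℤ)) * lam d := by
      rw [Finset.sum_mul, Finset.sum_filter]
    rw [hsum, mult_sum hdvd hd0]
    have h2 := gauss (n / d)
    have hdn : (d : ℤ) * ((n / d : ℕ) : ℤ) = (n : ℤ) := by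
      exact_mod_cast congrArg (Nat.cast : ℕ → ℤ) (Nat.mul_div_cancel' hdvd)
    linear_combination (lam d * (((n / d : ℕ) : ℤ) + 1)) * hdn + ((d : ℤ) * lam d) * h2
  rw [step1, Finset.sum_comm, Finset.mul_sum, Finset.sum_congr rfl step2]
  have hbeta : ∑ d ∈ n.divisors, ((n / d : ℕ) : ℤ) * lam d = beta n := by
    rw [beta, ← Nat.sum_div_divisors n (fun d => (d : ℤ) * lam (n / d))]
    refine Finset.sum_congr rfl fun d hd => ?_
    rw [Nat.div_div_self (Nat.mem_divisors.mp hd).1 hn0]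
  calc ∑ d ∈ n.divisors, ((n : ℤ) * ((n / d : ℕ) : ℤ) + (n : ℤ)) * lam d
      = (n : ℤ) * ∑ d ∈ n.divisors, ((n / d : ℕ) : ℤ) * lam d
        + (n : ℤ) * ∑ d ∈ n.divisors, lam d := by
        rw [Finset.mul_sum, Finset.mul_sum, ← Finset.sum_add_distrib]
        exact Finset.sum_congr rfl fun d _ => by ring
    _ = (n : ℤ) * (beta n + if IsSquare n then 1 else 0) := by
        rw [hbeta, sum_lam hn0]; ring
end

section
/- The function β is super-multiplicative: for all positive integers n and m, β(nm) ≥ β(n)·β(m). -/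
/-- `lam` as an arithmetic function. -/
def Lfun : ArithmeticFunction ℤ := ⟨fun n => if n = 0 then 0 else lam n, if_pos rfl⟩

/-- The identity as an integer-valued arithmetic function. -/
def Idz : ArithmeticFunction ℤ := ⟨fun n => n, Nat.cast_zero⟩

lemma Lfun_apply {n : ℕ} (hn : n ≠ 0) : Lfun n = lam n := if_neg hn

lemma Lfun_mult : Lfun.IsMultiplicative := by
  constructor
  · show Lfun 1 = 1
    rw [Lfun_apply one_ne_zero]
    simp [lam]
  · intro a b hab
    rcases eq_or_ne a 0 with rfl | ha
    · have : b = 1 := by simpa using hab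
      subst this
      show Lfun 0 = Lfun 0 * Lfun 1
      rw [Lfun_apply one_ne_zero]
      simp [lam]
    rcases eq_or_ne b 0 with rfl | hb
    · have : a = 1 := by simpa using hab
      subst this
      show Lfun 0 = Lfun 1 * Lfun 0
      rw [Lfun_apply one_ne_zero]
      simp [lam]
    rw [Lfun_apply (mul_ne_zero ha hb), Lfun_apply ha, Lfun_apply hb]
    unfold lam
    rw [ArithmeticFunction.cardFactors_mul ha hb, pow_add]

lemma Idz_mult : Idz.IsMultiplicative := by
  constructor
  · show ((1 : ℕ) : ℤ) = 1; simp
  · intro a b _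
    show ((a * b : ℕ) : ℤ) = (a : ℤ) * b
    push_cast; ring

lemma beta_eq_conv {n : ℕ} (hn : n ≠ 0) : (Idz * Lfun) n = beta n := by
  rw [ArithmeticFunction.mul_apply]
  rw [show ∑ x ∈ n.divisorsAntidiagonal, Idz x.1 * Lfun x.2
      = ∑ d ∈ n.divisors, Idz d * Lfun (n / d) from
    Nat.sum_divisorsAntidiagonal (fun a b => Idz a * Lfun b)]
  unfold beta
  refine Finset.sum_congr rfl fun d hd => ?_
  have hd' := (Nat.mem_divisors.mp hd)
  have hdn : n / d ≠ 0 := by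
    have := Nat.div_pos (Nat.le_of_dvd (Nat.pos_of_ne_zero hn) hd'.1)
      (Nat.pos_of_dvd_of_pos hd'.1 (Nat.pos_of_ne_zero hn))
    omega
  rw [Lfun_apply hdn]
  rfl

lemma conv_mult : (Idz * Lfun).IsMultiplicative := Idz_mult.mul Lfun_mult

lemma beta_prime_pow {p : ℕ} (hp : p.Prime) (k : ℕ) :
    beta (p ^ k) = ∑ j ∈ Finset.range (k + 1), (-1 : ℤ) ^ (k - j) * p ^ j := by
  unfold beta
  rw [Nat.sum_divisors_prime_pow hp]
  refine Finset.sum_congr rfl fun j hj => ?_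
  have hj' : j ≤ k := by simpa [Nat.lt_succ_iff] using hj
  rw [Nat.pow_div hj' hp.pos]
  unfold lam
  rw [ArithmeticFunction.cardFactors_apply_prime_pow hp]
  push_cast
  ring

lemma beta_prime_pow_closed {p : ℕ} (hp : p.Prime) (k : ℕ) :
    ((p : ℤ) + 1) * beta (p ^ k) = (p : ℤ) ^ (k + 1) + (-1) ^ k := by
  rw [beta_prime_pow hp]
  induction k with
  | zero => simp
  | succ k ih =>
    have hstep : ∑ j ∈ Finset.range (k + 1 + 1), (-1 : ℤ) ^ (k + 1 - j) * p ^ j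
        = (p : ℤ) ^ (k + 1) - ∑ j ∈ Finset.range (k + 1), (-1 : ℤ) ^ (k - j) * p ^ j := by
      rw [Finset.sum_range_succ]
      have : ∑ j ∈ Finset.range (k + 1), (-1 : ℤ) ^ (k + 1 - j) * p ^ j
          = -∑ j ∈ Finset.range (k + 1), (-1 : ℤ) ^ (k - j) * p ^ j := by
        rw [← Finset.sum_neg_distrib]
        refine Finset.sum_congr rfl fun j hj => ?_
        have hj' : j ≤ k := by simpa [Nat.lt_succ_iff] using hj
        rw [show k + 1 - j = (k - j) + 1 by omega, pow_succ]
        ring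
      rw [this, Nat.sub_self, pow_zero, one_mul]
      ring
    rw [hstep, mul_sub, ih]
    ring

lemma beta_prime_pow_nonneg {p : ℕ} (hp : p.Prime) (k : ℕ) : 0 ≤ beta (p ^ k) := by
  have h := beta_prime_pow_closed hp k
  have hp1 : (0 : ℤ) < (p : ℤ) + 1 := by positivity
  have h1 : (1 : ℤ) ≤ (p : ℤ) ^ (k + 1) := one_le_pow₀ (by exact_mod_cast hp.one_lt.le)
  have h2 : (-1 : ℤ) ^ k = 1 ∨ (-1 : ℤ) ^ k = -1 := neg_one_pow_eq_or ℤ k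
  have h2' : (-1 : ℤ) ≤ (-1 : ℤ) ^ k := by rcases h2 with h | h <;> rw [h] <;> norm_num
  nlinarith [h2', h1, h]

lemma beta_prime_pow_super {p : ℕ} (hp : p.Prime) (a b : ℕ) :
    beta (p ^ a) * beta (p ^ b) ≤ beta (p ^ (a + b)) := by
  have ha := beta_prime_pow_closed hp a
  have hb := beta_prime_pow_closed hp b
  have hab := beta_prime_pow_closed hp (a + b)
  have hp2 : (2 : ℤ) ≤ (p : ℤ) := by exact_mod_cast hp.two_le
  have hea : (-1 : ℤ) ^ a = 1 ∨ (-1 : ℤ) ^ a = -1 := neg_one_pow_eq_or ℤ a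
  have heb : (-1 : ℤ) ^ b = 1 ∨ (-1 : ℤ) ^ b = -1 := neg_one_pow_eq_or ℤ b
  have hxa : (1 : ℤ) ≤ (p : ℤ) ^ a := one_le_pow₀ (by linarith)
  have hxb : (1 : ℤ) ≤ (p : ℤ) ^ b := one_le_pow₀ (by linarith)
  have hsq : (0 : ℤ) < ((p : ℤ) + 1) ^ 2 := by positivity
  rw [← mul_le_mul_iff_right₀ hsq]
  have key : ((p : ℤ) + 1) ^ 2 * (beta (p ^ (a + b)))
      - ((p : ℤ) + 1) ^ 2 * (beta (p ^ a) * beta (p ^ b))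
      = (p : ℤ) * (((p : ℤ) ^ a - (-1) ^ a) * ((p : ℤ) ^ b - (-1) ^ b)) := by
    have e1 : ((p : ℤ) + 1) ^ 2 * (beta (p ^ a) * beta (p ^ b))
        = (((p : ℤ) + 1) * beta (p ^ a)) * (((p : ℤ) + 1) * beta (p ^ b)) := by ring
    have e2 : ((p : ℤ) + 1) ^ 2 * (beta (p ^ (a + b)))
        = ((p : ℤ) + 1) * (((p : ℤ) + 1) * beta (p ^ (a + b))) := by ring
    rw [e1, e2, ha, hb, hab]
    simp only [pow_succ, pow_add]
    ring
  have hfa : (0 : ℤ) ≤ (p : ℤ) ^ a - (-1) ^ a := by rcases hea with h | h <;> rw [h] <;> linarith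
  have hfb : (0 : ℤ) ≤ (p : ℤ) ^ b - (-1) ^ b := by rcases heb with h | h <;> rw [h] <;> linarith
  nlinarith [mul_nonneg hfa hfb]

theorem stmt_11 (n m : ℕ) (hn : 0 < n) (hm : 0 < m) :
    beta n * beta m ≤ beta (n * m) := by
  have hn' : n ≠ 0 := hn.ne'
  have hm' : m ≠ 0 := hm.ne'
  have hnm : n * m ≠ 0 := mul_ne_zero hn' hm'
  set F := Idz * Lfun with hF
  have hmult := conv_mult
  set S := (n * m).primeFactors with hS
  have hprime : ∀ p ∈ S, p.Prime := fun p hp => Nat.prime_of_mem_primeFactors hp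
  have hfact : ∀ (x : ℕ), x ≠ 0 → x.factorization.support ⊆ S → beta x
      = ∏ p ∈ S, beta (p ^ x.factorization p) := by
    intro x hx hsub
    rw [← beta_eq_conv hx, hmult.multiplicative_factorization F hx,
      Finsupp.prod_of_support_subset _ hsub _ (fun p _ => by simp only [pow_zero]; exact hmult.map_one)]
    refine Finset.prod_congr rfl fun p hp => ?_
    exact beta_eq_conv (pow_ne_zero _ (hprime p hp).ne_zero)
  have hsubn : n.factorization.support ⊆ S := by
    rw [Nat.support_factorization, hS, Nat.primeFactors_mul hn' hm']
    exact Finset.subset_union_left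
  have hsubm : m.factorization.support ⊆ S := by
    rw [Nat.support_factorization, hS, Nat.primeFactors_mul hn' hm']
    exact Finset.subset_union_right
  have hsubnm : (n * m).factorization.support ⊆ S := by
    rw [Nat.support_factorization]
  have h1 := hfact n hn' hsubn
  have h2 := hfact m hm' hsubm
  have h3 := hfact (n * m) hnm hsubnm
  rw [h1, h2, h3, ← Finset.prod_mul_distrib]
  refine Finset.prod_le_prod (fun p hp => mul_nonneg (beta_prime_pow_nonneg (hprime p hp) _)
    (beta_prime_pow_nonneg (hprime p hp) _)) (fun p hp => ?_)
  rw [Nat.factorization_mul hn' hm']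
  simpa using beta_prime_pow_super (hprime p hp) (n.factorization p) (m.factorization p)
end

section
/- For every positive integer n, β(n)/n = (π²/15)·Σ_{r=1}^{∞} (λ(r)/r²)·c_r(n), where the series converges absolutely and c_r(n) = Σ_{d ∣ gcd(r,n)} d·μ(r/d) is the Ramanujan sum. -/
/-- The Ramanujan sum `c_r(n) = ∑_{d ∣ gcd(r,n)} d · μ(r/d)`. -/
def ramanujanSum (r n : ℕ) : ℤ :=
  ∑ d ∈ (Nat.gcd r n).divisors, (d : ℤ) * (ArithmeticFunction.moebius (r / d) : ℤ)

open ArithmeticFunction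

open ArithmeticFunction in
lemma lam_one : lam 1 = 1 := by simp [lam]

open ArithmeticFunction in
lemma lam_mul_s16 {a b : ℕ} (ha : a ≠ 0) (hb : b ≠ 0) : lam (a * b) = lam a * lam b := by
  unfold lam
  rw [ArithmeticFunction.cardFactors_mul ha hb, pow_add]

lemma lam_abs (n : ℕ) : |lam n| = 1 := by
  unfold lam
  rw [abs_pow, abs_neg, abs_one, one_pow]

lemma isSquare_mul_of_coprime {a b : ℕ} (h : Nat.Coprime a b) :
    IsSquare (a * b) ↔ IsSquare a ∧ IsSquare b := by
  constructor
  · rintro ⟨c, hc⟩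
    have hc2 : a * b = c ^ 2 := by rw [hc]; ring
    have hu : IsUnit (gcd a b) := by
      rw [Nat.isUnit_iff]
      exact h
    obtain ⟨d, hd⟩ := exists_eq_pow_of_mul_eq_pow hu hc2
    have hc2' : b * a = c ^ 2 := by rw [mul_comm]; exact hc2
    have hu' : IsUnit (gcd b a) := by
      rw [Nat.isUnit_iff]
      exact h.symm
    obtain ⟨e, he⟩ := exists_eq_pow_of_mul_eq_pow hu' hc2'
    exact ⟨⟨d, by rw [hd]; ring⟩, ⟨e, by rw [he]; ring⟩⟩
  · rintro ⟨⟨x, hx⟩, ⟨y, hy⟩⟩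
    exact ⟨x * y, by rw [hx, hy]; ring⟩

lemma isSquare_prime_pow_iff {p k : ℕ} (hp : p.Prime) : IsSquare (p ^ k) ↔ Even k := by
  constructor
  · rintro ⟨a, ha⟩
    have hdvd : a ∣ p ^ k := Dvd.intro_left a ha.symm
    obtain ⟨j, hj, rfl⟩ := (Nat.dvd_prime_pow hp).mp hdvd
    have : p ^ k = p ^ (j + j) := by rw [ha, pow_add]
    have hk : k = j + j := Nat.pow_right_injective hp.two_le this
    exact ⟨j, hk⟩
  · intro hk
    exact hk.isSquare_pow p

noncomputable def lamAF : ArithmeticFunction ℤ := ⟨fun n => if n = 0 then 0 else lam n, rfl⟩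

lemma lamAF_apply {n : ℕ} (hn : n ≠ 0) : lamAF n = lam n := if_neg hn

lemma lamAF_mult : lamAF.IsMultiplicative := by
  constructor
  · simp [lamAF, lam_one]
  · intro m n h
    rcases eq_or_ne m 0 with rfl | hm
    · simp [lamAF]
    rcases eq_or_ne n 0 with rfl | hn
    · simp [lamAF]
    rw [lamAF_apply (mul_ne_zero hm hn), lamAF_apply hm, lamAF_apply hn, lam_mul_s16 hm hn]

noncomputable def sqAF : ArithmeticFunction ℤ :=
  ⟨fun n => if n = 0 then 0 else if IsSquare n then 1 else 0, rfl⟩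

lemma sqAF_apply {n : ℕ} (hn : n ≠ 0) : sqAF n = if IsSquare n then 1 else 0 := if_neg hn

lemma sqAF_mult : sqAF.IsMultiplicative := by
  constructor
  · simp [sqAF, IsSquare.one]
  · intro m n h
    rcases eq_or_ne m 0 with rfl | hm
    · simp [sqAF]
    rcases eq_or_ne n 0 with rfl | hn
    · simp [sqAF]
    rw [sqAF_apply (mul_ne_zero hm hn), sqAF_apply hm, sqAF_apply hn]
    by_cases h1 : IsSquare m <;> by_cases h2 : IsSquare n <;>
      simp [h1, h2, isSquare_mul_of_coprime h]

lemma zeta_mul_lamAF : (↑zeta * lamAF : ArithmeticFunction ℤ) = sqAF := by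
  refine (ArithmeticFunction.IsMultiplicative.eq_iff_eq_on_prime_powers _
    (isMultiplicative_zeta.natCast.mul lamAF_mult) _ sqAF_mult).mpr ?_
  intro p k hp
  rw [coe_zeta_mul_apply, Nat.sum_divisors_prime_pow hp]
  have hterm : ∀ i : ℕ, lamAF (p ^ i) = (-1) ^ i := by
    intro i
    rw [lamAF_apply (pow_ne_zero i hp.pos.ne'), lam,
      ArithmeticFunction.cardFactors_apply_prime_pow hp]
  simp_rw [hterm]
  rw [neg_one_geom_sum, sqAF_apply (pow_ne_zero k hp.pos.ne')]
  simp only [isSquare_prime_pow_iff hp, Nat.even_add_one]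
  by_cases hk : Even k <;> simp [hk]

lemma sum_divisors_lam {m : ℕ} (hm : m ≠ 0) :
    ∑ d ∈ m.divisors, lam d = if IsSquare m then 1 else 0 := by
  have h := congrArg (fun f : ArithmeticFunction ℤ => f m) zeta_mul_lamAF
  simp only [coe_zeta_mul_apply] at h
  rw [Finset.sum_congr rfl (fun d hd => lamAF_apply (Nat.pos_of_mem_divisors hd).ne'),
    sqAF_apply hm] at h
  exact h

lemma sum_divisors_moebius (m : ℕ) :
    ∑ d ∈ m.divisors, (moebius d : ℤ) = if m = 1 then 1 else 0 := by
  have h := congrArg (fun f : ArithmeticFunction ℤ => f m) moebius_mul_coe_zeta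
  simp only [coe_mul_zeta_apply, one_apply] at h
  exact h

/-- Dirichlet convolution of absolutely summable real series. -/
lemma hasSum_dconv {f g : ℕ → ℝ} {a b : ℝ} (hf0 : f 0 = 0) (hg0 : g 0 = 0)
    (hf : HasSum f a) (hg : HasSum g b)
    (hfa : Summable fun n => |f n|) (hga : Summable fun n => |g n|) :
    HasSum (fun n : ℕ => ∑ p ∈ n.divisorsAntidiagonal, f p.1 * g p.2) (a * b) := by
  have hfa' : Summable fun n => ‖f n‖ := by simpa [Real.norm_eq_abs] using hfa
  have hga' : Summable fun n => ‖g n‖ := by simpa [Real.norm_eq_abs] using hga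
  have hsum : Summable fun p : ℕ × ℕ => f p.1 * g p.2 :=
    summable_mul_of_summable_norm hfa' hga'
  have H := (hf.mul hg hsum).tsum_fiberwise (fun p : ℕ × ℕ => p.1 * p.2)
  have key : (fun n : ℕ => ∑ p ∈ n.divisorsAntidiagonal, f p.1 * g p.2)
      = fun n => ∑' (p : (fun p : ℕ × ℕ => p.1 * p.2) ⁻¹' {n}), f p.val.1 * g p.val.2 := by
    funext n
    rcases eq_or_ne n 0 with rfl | hn
    · rw [Nat.divisorsAntidiagonal_zero, Finset.sum_empty]
      symm
      rw [tsum_congr (fun p => ?_), tsum_zero]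
      obtain ⟨⟨p1, p2⟩, hp⟩ := p
      have hp' : p1 * p2 = 0 := hp
      rcases Nat.mul_eq_zero.mp hp' with rfl | rfl <;> simp [hf0, hg0]
    · rw [show ((fun p : ℕ × ℕ => p.1 * p.2) ⁻¹' {n}) = ↑n.divisorsAntidiagonal by
        ext p; simp [Nat.mem_divisorsAntidiagonal, hn],
        Finset.tsum_subtype' n.divisorsAntidiagonal (fun p => f p.1 * g p.2)]
  rw [key]
  exact H

noncomputable def f2 : ℕ → ℝ := fun m => 1 / (m : ℝ) ^ 2
noncomputable def fl : ℕ → ℝ := fun m => (lam m : ℝ) / (m : ℝ) ^ 2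
noncomputable def wgt : ℕ → ℝ := fun m => (moebius m : ℝ) * (lam m : ℝ) / (m : ℝ) ^ 2

lemma f2_zero : f2 0 = 0 := by simp [f2]
lemma fl_zero : fl 0 = 0 := by simp [fl]
lemma wgt_zero : wgt 0 = 0 := by simp [wgt]

lemma hasSum_f2 : HasSum f2 (Real.pi ^ 2 / 6) := hasSum_zeta_two

lemma abs_fl_le (m : ℕ) : |fl m| ≤ f2 m := by
  rw [fl, f2, abs_div]
  have h1 : |(lam m : ℝ)| = 1 := by
    rw [← Int.cast_abs, lam_abs m, Int.cast_one]
  rw [h1, abs_of_nonneg (show (0:ℝ) ≤ (m:ℝ) ^ 2 by positivity)]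

lemma abs_moebius_le_one (m : ℕ) : |(moebius m : ℤ)| ≤ 1 := by
  by_cases h : Squarefree m
  · rw [ArithmeticFunction.moebius_apply_of_squarefree h, abs_pow, abs_neg, abs_one, one_pow]
  · rw [ArithmeticFunction.moebius_eq_zero_of_not_squarefree h]
    simp

lemma abs_wgt_le (m : ℕ) : |wgt m| ≤ f2 m := by
  rw [wgt, f2, abs_div, abs_mul]
  have h1 : |(lam m : ℝ)| = 1 := by rw [← Int.cast_abs, lam_abs m, Int.cast_one]
  have h2 : |(moebius m : ℝ)| ≤ 1 := by
    rw [show ((moebius m : ℝ)) = ((moebius m : ℤ) : ℝ) by norm_num, ← Int.cast_abs]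
    exact_mod_cast abs_moebius_le_one m
  rw [h1, mul_one, abs_of_nonneg (show (0:ℝ) ≤ (m:ℝ) ^ 2 by positivity)]
  rcases eq_or_ne m 0 with rfl | hm
  · simp
  · rw [div_le_div_iff_of_pos_right (show (0:ℝ) < (m:ℝ) ^ 2 by positivity)]
    exact h2

lemma summable_abs_fl : Summable fun m => |fl m| :=
  Summable.of_nonneg_of_le (fun _ => abs_nonneg _) abs_fl_le hasSum_f2.summable

lemma summable_abs_wgt : Summable fun m => |wgt m| :=
  Summable.of_nonneg_of_le (fun _ => abs_nonneg _) abs_wgt_le hasSum_f2.summable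

lemma summable_fl : Summable fl := summable_abs_fl.of_abs
lemma summable_wgt : Summable wgt := summable_abs_wgt.of_abs

noncomputable def Ll : ℝ := ∑' m, fl m
noncomputable def Kk : ℝ := ∑' m, wgt m

/-- square indicator over m^2 -/
noncomputable def sq2 : ℕ → ℝ := fun m => (if IsSquare m then (1:ℝ) else 0) / (m : ℝ) ^ 2

lemma hasSum_sq2 : HasSum sq2 (Real.pi ^ 4 / 90) := by
  have hinj : Function.Injective (fun j : ℕ => j ^ 2) :=
    fun a b h => Nat.pow_left_injective (by norm_num) h
  have hsupp : ∀ m ∉ Set.range (fun j : ℕ => j ^ 2), sq2 m = 0 := by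
    intro m hm
    have : ¬ IsSquare m := by
      rintro ⟨r, rfl⟩
      exact hm ⟨r, by simp [pow_two]⟩
    simp [sq2, this]
  rw [← Function.Injective.hasSum_iff hinj hsupp]
  have : (sq2 ∘ fun j : ℕ => j ^ 2) = fun j : ℕ => 1 / (j : ℝ) ^ 4 := by
    funext j
    have : IsSquare (j ^ 2) := ⟨j, sq j⟩
    simp only [Function.comp_apply, sq2, if_pos this]
    push_cast
    ring
  rw [this]
  exact hasSum_zeta_four

lemma conv_f2_fl : (fun m : ℕ => ∑ p ∈ m.divisorsAntidiagonal, f2 p.1 * fl p.2) = sq2 := by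
  funext m
  rcases eq_or_ne m 0 with rfl | hm
  · simp [sq2]
  rw [Nat.sum_divisorsAntidiagonal' (f := fun a b => f2 a * fl b)]
  have hstep : ∀ d ∈ m.divisors, f2 (m / d) * fl d = (lam d : ℝ) / (m : ℝ) ^ 2 := by
    intro d hd
    obtain ⟨hdvd, _⟩ := Nat.mem_divisors.mp hd
    have hd0 : d ≠ 0 := (Nat.pos_of_mem_divisors hd).ne'
    have hmd : ((m / d : ℕ) : ℝ) = (m : ℝ) / (d : ℝ) := by
      rw [Nat.cast_div hdvd (Nat.cast_ne_zero.mpr hd0)]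
    rw [f2, fl, hmd]
    have hdR : (d : ℝ) ≠ 0 := Nat.cast_ne_zero.mpr hd0
    have hmR : (m : ℝ) ≠ 0 := Nat.cast_ne_zero.mpr hm
    field_simp
  rw [Finset.sum_congr rfl hstep, ← Finset.sum_div, sq2]
  have hc : ∑ d ∈ m.divisors, (lam d : ℝ) = ((∑ d ∈ m.divisors, lam d : ℤ) : ℝ) := by
    push_cast
    rfl
  rw [hc, sum_divisors_lam hm]
  by_cases h : IsSquare m <;> simp [h]

lemma Ll_eq : Ll = Real.pi ^ 2 / 15 := by
  have h1 : HasSum (fun m : ℕ => ∑ p ∈ m.divisorsAntidiagonal, f2 p.1 * fl p.2)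
      ((Real.pi ^ 2 / 6) * Ll) :=
    hasSum_dconv f2_zero fl_zero hasSum_f2 summable_fl.hasSum
      (by simp only [f2]; rw [show (fun n : ℕ => |1 / (n:ℝ) ^ 2|) = fun n : ℕ => 1 / (n:ℝ) ^ 2 by funext n; rw [abs_of_nonneg (by positivity)]]; exact hasSum_f2.summable) summable_abs_fl
  rw [conv_f2_fl] at h1
  have h2 : (Real.pi ^ 2 / 6) * Ll = Real.pi ^ 4 / 90 := h1.unique hasSum_sq2
  have hp2 : (Real.pi : ℝ) ^ 2 ≠ 0 := pow_ne_zero _ Real.pi_ne_zero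
  have h4 : Ll = (Real.pi ^ 4 / 90) / (Real.pi ^ 2 / 6) := by
    rw [eq_div_iff (by simp [hp2] : (Real.pi ^ 2 / 6 : ℝ) ≠ 0)]
    linarith [h2]
  rw [h4]
  field_simp
  ring

lemma conv_fl_wgt : (fun m : ℕ => ∑ p ∈ m.divisorsAntidiagonal, fl p.1 * wgt p.2)
    = fun m : ℕ => if m = 1 then (1:ℝ) else 0 := by
  funext m
  rcases eq_or_ne m 0 with rfl | hm
  · simp
  rw [Nat.sum_divisorsAntidiagonal (f := fun a b => fl a * wgt b)]
  have hstep : ∀ d ∈ m.divisors, fl d * wgt (m / d)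
      = (lam m : ℝ) / (m : ℝ) ^ 2 * (moebius (m / d) : ℝ) := by
    intro d hd
    obtain ⟨hdvd, _⟩ := Nat.mem_divisors.mp hd
    have hd0 : d ≠ 0 := (Nat.pos_of_mem_divisors hd).ne'
    have hq0 : m / d ≠ 0 := by
      have := Nat.div_pos (Nat.le_of_dvd (Nat.pos_of_ne_zero hm) hdvd) (Nat.pos_of_ne_zero hd0)
      exact this.ne'
    have hlam : (lam d : ℝ) * (lam (m / d) : ℝ) = (lam m : ℝ) := by
      rw [← Int.cast_mul, ← lam_mul_s16 hd0 hq0, Nat.mul_div_cancel' hdvd]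
    have hmd : ((m / d : ℕ) : ℝ) = (m : ℝ) / (d : ℝ) := by
      rw [Nat.cast_div hdvd (Nat.cast_ne_zero.mpr hd0)]
    rw [fl, wgt, hmd]
    have hdR : (d : ℝ) ≠ 0 := Nat.cast_ne_zero.mpr hd0
    have hmR : (m : ℝ) ≠ 0 := Nat.cast_ne_zero.mpr hm
    field_simp
    rw [← hlam]
    ring
  rw [Finset.sum_congr rfl hstep, ← Finset.mul_sum]
  have : ∑ d ∈ m.divisors, (moebius (m / d) : ℝ) = ∑ d ∈ m.divisors, (moebius d : ℝ) :=
    Nat.sum_div_divisors m (fun d => (moebius d : ℝ))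
  rw [this]
  have hmu : ∑ d ∈ m.divisors, (moebius d : ℝ) = if m = 1 then 1 else 0 := by
    have := sum_divisors_moebius m
    have hcast := congrArg (fun z : ℤ => (z : ℝ)) this
    push_cast at hcast
    rw [hcast]
  rw [hmu]
  by_cases h : m = 1
  · subst h
    simp [lam_one]
  · simp [h]

lemma Kk_eq : Kk = 15 / Real.pi ^ 2 := by
  have h1 : HasSum (fun m : ℕ => ∑ p ∈ m.divisorsAntidiagonal, fl p.1 * wgt p.2) (Ll * Kk) :=
    hasSum_dconv fl_zero wgt_zero summable_fl.hasSum summable_wgt.hasSum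
      summable_abs_fl summable_abs_wgt
  rw [conv_fl_wgt] at h1
  have h2 : HasSum (fun m : ℕ => if m = 1 then (1:ℝ) else 0) 1 := hasSum_ite_eq 1 1
  have h3 := h1.unique h2
  rw [Ll_eq] at h3
  have hp2 : (Real.pi : ℝ) ^ 2 ≠ 0 := pow_ne_zero _ Real.pi_ne_zero
  rw [eq_div_iff hp2]
  linarith [h3]

theorem stmt_16 (n : ℕ) (hn : 0 < n) :
    Summable (fun r : ℕ =>
      |(lam (r + 1) : ℝ) / ((r : ℝ) + 1) ^ 2 * (ramanujanSum (r + 1) n : ℝ)|) ∧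
    (beta n : ℝ) / (n : ℝ) =
      (Real.pi ^ 2 / 15) *
        ∑' r : ℕ, (lam (r + 1) : ℝ) / ((r : ℝ) + 1) ^ 2 * (ramanujanSum (r + 1) n : ℝ) := by
  have hn0 : n ≠ 0 := hn.ne'
  set G : ℕ → ℝ := fun r => (lam r : ℝ) / (r : ℝ) ^ 2 * (ramanujanSum r n : ℝ) with hGdef
  have hGs : (fun r : ℕ =>
      (lam (r + 1) : ℝ) / ((r : ℝ) + 1) ^ 2 * (ramanujanSum (r + 1) n : ℝ))
      = fun r : ℕ => G (r + 1) := by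
    funext r
    simp only [hGdef]
    push_cast
    ring
  -- bound on Ramanujan sums
  set C : ℝ := ∑ d ∈ n.divisors, (d : ℝ) with hCdef
  have hCpos : 0 ≤ C := Finset.sum_nonneg fun d _ => Nat.cast_nonneg d
  have hram : ∀ r : ℕ, |(ramanujanSum r n : ℝ)| ≤ C := by
    intro r
    have h1 : (ramanujanSum r n : ℝ)
        = ∑ d ∈ (Nat.gcd r n).divisors, (d : ℝ) * ((moebius (r / d) : ℤ) : ℝ) := by
      rw [ramanujanSum]
      push_cast
      rfl
    rw [h1]
    refine (Finset.abs_sum_le_sum_abs _ _).trans ?_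
    have h2 : ∀ d ∈ (Nat.gcd r n).divisors, |(d : ℝ) * ((moebius (r / d) : ℤ) : ℝ)| ≤ (d : ℝ) := by
      intro d _
      rw [abs_mul, abs_of_nonneg (Nat.cast_nonneg d : (0:ℝ) ≤ d)]
      have : |((moebius (r / d) : ℤ) : ℝ)| ≤ 1 := by
        rw [← Int.cast_abs]
        exact_mod_cast abs_moebius_le_one (r / d)
      nlinarith [Nat.cast_nonneg (α := ℝ) d, abs_nonneg ((moebius (r/d) : ℤ) : ℝ)]
    refine (Finset.sum_le_sum h2).trans ?_
    refine Finset.sum_le_sum_of_subset_of_nonneg ?_ (fun d _ _ => Nat.cast_nonneg d)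
    exact Nat.divisors_subset_of_dvd hn0 (Nat.gcd_dvd_right r n)
  have habsG : ∀ r, |G r| ≤ C * f2 r := by
    intro r
    rw [hGdef]
    simp only
    rw [abs_mul, abs_div]
    have h1 : |(lam r : ℝ)| = 1 := by rw [← Int.cast_abs, lam_abs r, Int.cast_one]
    rw [h1, abs_of_nonneg (show (0:ℝ) ≤ (r:ℝ)^2 by positivity), f2]
    calc 1 / (r:ℝ)^2 * |(ramanujanSum r n : ℝ)| ≤ 1/(r:ℝ)^2 * C := by
          apply mul_le_mul_of_nonneg_left (hram r) (by positivity)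
      _ = C * (1/(r:ℝ)^2) := by ring
  have hsumCf2 : Summable fun r => C * f2 r := hasSum_f2.summable.mul_left C
  have hsumabsG : Summable fun r => |G r| :=
    Summable.of_nonneg_of_le (fun _ => abs_nonneg _) habsG hsumCf2
  have hsumG : Summable G := hsumabsG.of_abs
  constructor
  · have heq : (fun r : ℕ =>
        |(lam (r + 1) : ℝ) / ((r : ℝ) + 1) ^ 2 * (ramanujanSum (r + 1) n : ℝ)|)
        = (fun r => |G r|) ∘ (fun r : ℕ => r + 1) := by
      funext r
      exact congrArg abs (congrFun hGs r)
    rw [heq]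
    exact hsumabsG.comp_injective (add_left_injective 1)
  -- main identity
  set H : ℕ → ℕ → ℝ := fun d r =>
    if d ∣ r then (lam r : ℝ) / (r : ℝ) ^ 2 * ((d : ℝ) * ((moebius (r / d) : ℤ) : ℝ)) else 0
    with hHdef
  have hGH : ∀ r, G r = ∑ d ∈ n.divisors, H d r := by
    intro r
    rcases eq_or_ne r 0 with rfl | hr
    · simp [hGdef, hHdef]
    · have hfilter : (Nat.gcd r n).divisors = n.divisors.filter (· ∣ r) := by
        ext d
        simp only [Nat.mem_divisors, Finset.mem_filter, Nat.dvd_gcd_iff]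
        constructor
        · rintro ⟨⟨h1, h2⟩, -⟩
          exact ⟨⟨h2, hn0⟩, h1⟩
        · rintro ⟨⟨h2, -⟩, h1⟩
          exact ⟨⟨h1, h2⟩, Nat.gcd_ne_zero_left hr⟩
      have h1 : (ramanujanSum r n : ℝ) = ∑ d ∈ n.divisors,
          (if d ∣ r then (d : ℝ) * ((moebius (r / d) : ℤ) : ℝ) else 0) := by
        rw [ramanujanSum, hfilter, Finset.sum_filter]
        push_cast
        exact Finset.sum_congr rfl fun d _ => by by_cases hdr : d ∣ r <;> simp [hdr]
      rw [hGdef]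
      simp only
      rw [h1, Finset.mul_sum]
      refine Finset.sum_congr rfl fun d hd => ?_
      rw [hHdef]
      simp only
      by_cases hdr : d ∣ r <;> simp [hdr]
  have habsH : ∀ d r, |H d r| ≤ (d : ℝ) * f2 r := by
    intro d r
    have hf2 : (0:ℝ) ≤ f2 r := by rw [f2]; positivity
    have hd : (0:ℝ) ≤ (d:ℝ) := Nat.cast_nonneg d
    rw [hHdef]
    simp only
    by_cases hdr : d ∣ r
    · rw [if_pos hdr, abs_mul]
      have h1 : |(lam r : ℝ) / (r:ℝ)^2| = f2 r := by
        rw [abs_div, show |(lam r : ℝ)| = 1 by rw [← Int.cast_abs, lam_abs r, Int.cast_one],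
          f2, abs_of_nonneg (show (0:ℝ) ≤ (r:ℝ)^2 by positivity)]
      have h2 : |((moebius (r/d) : ℤ) : ℝ)| ≤ 1 := by
        rw [← Int.cast_abs]
        exact_mod_cast abs_moebius_le_one (r / d)
      rw [h1, abs_mul, abs_of_nonneg hd]
      nlinarith [mul_nonneg (mul_nonneg hf2 hd) (sub_nonneg.mpr h2)]
    · rw [if_neg hdr, abs_zero]
      positivity
  have hsumH : ∀ d : ℕ, Summable (H d) := by
    intro d
    apply Summable.of_abs
    exact Summable.of_nonneg_of_le (fun _ => abs_nonneg _) (habsH d)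
      (hasSum_f2.summable.mul_left _)
  have hswap : ∑' r, G r = ∑ d ∈ n.divisors, ∑' r, H d r := by
    rw [tsum_congr hGH]
    exact Summable.tsum_finsetSum (fun d _ => hsumH d)
  have hinner : ∀ d ∈ n.divisors, ∑' r, H d r = (lam d : ℝ) / (d : ℝ) * Kk := by
    intro d hd
    have hd0 : d ≠ 0 := (Nat.pos_of_mem_divisors hd).ne'
    have hinj : Function.Injective (fun m : ℕ => d * m) :=
      fun a b h => Nat.eq_of_mul_eq_mul_left (Nat.pos_of_ne_zero hd0) h
    have hsupp : Function.support (H d) ⊆ Set.range (fun m : ℕ => d * m) := by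
      intro r hr
      rw [Function.mem_support] at hr
      have hdr : d ∣ r := by
        by_contra hc
        rw [hHdef] at hr
        simp only at hr
        exact hr (if_neg hc)
      obtain ⟨m, rfl⟩ := hdr
      exact ⟨m, rfl⟩
    rw [← Function.Injective.tsum_eq hinj hsupp]
    have hval : ∀ m : ℕ, H d (d * m) = (lam d : ℝ) / (d : ℝ) * wgt m := by
      intro m
      rcases eq_or_ne m 0 with rfl | hm
      · rw [hHdef, wgt]
        simp
      · have hdm : d * m ≠ 0 := mul_ne_zero hd0 hm
        rw [hHdef]
        simp only
        rw [if_pos (Dvd.intro m rfl), Nat.mul_div_cancel_left m (Nat.pos_of_ne_zero hd0), wgt]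
        have hlam : (lam (d * m) : ℝ) = (lam d : ℝ) * (lam m : ℝ) := by
          rw [← Int.cast_mul, lam_mul_s16 hd0 hm]
        have hdR : (d:ℝ) ≠ 0 := Nat.cast_ne_zero.mpr hd0
        have hmR : (m:ℝ) ≠ 0 := Nat.cast_ne_zero.mpr hm
        push_cast [hlam]
        field_simp
    rw [tsum_congr hval, tsum_mul_left]
    rfl
  have hS : ∑' r, G r = (∑ d ∈ n.divisors, (lam d : ℝ) / (d : ℝ)) * Kk := by
    rw [hswap, Finset.sum_congr rfl hinner, ← Finset.sum_mul]
  have htsum : ∑' r : ℕ, G (r + 1) = ∑' r, G r := by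
    have hG0 : G 0 = 0 := by rw [hGdef]; simp
    have hsupp : Function.support G ⊆ Set.range (fun r : ℕ => r + 1) := by
      intro r hr
      rcases r with _ | m
      · exact absurd hG0 hr
      · exact ⟨m, rfl⟩
    exact Function.Injective.tsum_eq (add_left_injective 1) hsupp
  have hbeta : (beta n : ℝ) / (n : ℝ) = ∑ d ∈ n.divisors, (lam d : ℝ) / (d : ℝ) := by
    have h1 : (beta n : ℝ) = ∑ d ∈ n.divisors, (d : ℝ) * (lam (n / d) : ℝ) := by
      rw [beta]
      push_cast
      rfl
    have h2 : ∑ d ∈ n.divisors, (d:ℝ) * (lam (n/d) : ℝ)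
        = ∑ d ∈ n.divisors, ((n/d : ℕ) : ℝ) * (lam d : ℝ) := by
      rw [← Nat.sum_div_divisors n (fun d => (d:ℝ) * (lam (n/d) : ℝ))]
      refine Finset.sum_congr rfl fun d hd => ?_
      rw [Nat.div_div_self (Nat.mem_divisors.mp hd).1 hn0]
    rw [h1, h2, Finset.sum_div]
    refine Finset.sum_congr rfl fun d hd => ?_
    obtain ⟨hdvd, -⟩ := Nat.mem_divisors.mp hd
    have hd0 : d ≠ 0 := (Nat.pos_of_mem_divisors hd).ne'
    rw [Nat.cast_div hdvd (Nat.cast_ne_zero.mpr hd0)]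
    have hdR : (d:ℝ) ≠ 0 := Nat.cast_ne_zero.mpr hd0
    have hnR : (n:ℝ) ≠ 0 := Nat.cast_ne_zero.mpr hn0
    field_simp
  rw [hGs, htsum, hS, hbeta, Kk_eq]
  have hpi : Real.pi ≠ 0 := Real.pi_ne_zero
  field_simp
end
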